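/- Let V be a finite-dimensional real vector space with a nondegenerate symmetric bilinear form ⟨·,·⟩, 𝔤 ⊆ V a Lagrangian subspace, and j: 𝔤* → V an isotropic splitting. For a subspace 𝓔₊ ⊆ V the following are equivalent: (a) dim 𝓔₊ = dim 𝔤 and ⟨·,·⟩ restricted to 𝓔₊ is positive definite; (b) there exists a linear map E₀: 𝔤* → 𝔤 whose symmetric part (ξ,η) ↦ ½(ξ(E₀η) + η(E₀ξ)) is positive definite, such that 𝓔₊ = {E₀(ξ) + j(ξ) : ξ ∈ 𝔤*}. Moreover, in case (b) the map E₀ is uniquely determined by 𝓔₊ and is invertible. -/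

import Mathlib

/-- **Generalized metrics as graphs.**
Given a Lagrangian subspace `g` of `(V, B)` and an isotropic splitting `j`,
a subspace `E₊ ⊆ V` is a generalized metric (of dimension `dim g` with `B`
positive definite on it) iff it is the graph `{E₀ ξ + j ξ : ξ ∈ g*}` of a
linear map `E₀ : g* → g` whose symmetric part `(ξ,η) ↦ (ξ(E₀η)+η(E₀ξ))/2`
is positive definite; moreover such `E₀` is unique and invertible. -/
theorem stmt2 (V : Type*) [AddCommGroup V] [Module ℝ V] [FiniteDimensional ℝ V]
    (B : LinearMap.BilinForm ℝ V) (hnd : B.Nondegenerate) (hsymm : B.IsSymm)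
    (g : Submodule ℝ V) (hlag : g = B.orthogonal g)
    (j : Module.Dual ℝ g →ₗ[ℝ] V)
    (hj : ∀ (ξ : Module.Dual ℝ g) (x : g), B (j ξ) x = ξ x)
    (hjiso : ∀ ξ η : Module.Dual ℝ g, B (j ξ) (j η) = 0)
    (Eplus : Submodule ℝ V) :
    ((Module.finrank ℝ Eplus = Module.finrank ℝ g ∧
        ∀ v ∈ Eplus, v ≠ 0 → 0 < B v v) ↔
      (∃ E0 : Module.Dual ℝ g →ₗ[ℝ] g,
        (∀ ξ : Module.Dual ℝ g, ξ ≠ 0 → 0 < (ξ (E0 ξ) + ξ (E0 ξ)) / 2) ∧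
        Eplus = LinearMap.range (g.subtype ∘ₗ E0 + j))) ∧
    (∀ E0 E0' : Module.Dual ℝ g →ₗ[ℝ] g,
      ((∀ ξ : Module.Dual ℝ g, ξ ≠ 0 → 0 < (ξ (E0 ξ) + ξ (E0 ξ)) / 2) ∧
        Eplus = LinearMap.range (g.subtype ∘ₗ E0 + j)) →
      ((∀ ξ : Module.Dual ℝ g, ξ ≠ 0 → 0 < (ξ (E0' ξ) + ξ (E0' ξ)) / 2) ∧
        Eplus = LinearMap.range (g.subtype ∘ₗ E0' + j)) →
      E0 = E0') ∧
    (∀ E0 : Module.Dual ℝ g →ₗ[ℝ] g,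
      ((∀ ξ : Module.Dual ℝ g, ξ ≠ 0 → 0 < (ξ (E0 ξ) + ξ (E0 ξ)) / 2) ∧
        Eplus = LinearMap.range (g.subtype ∘ₗ E0 + j)) →
      Function.Bijective E0) := by
  classical
  have hsym : ∀ x y : V, B x y = B y x := fun x y => hsymm.eq x y
  -- g is isotropic
  have hgg : ∀ x ∈ g, ∀ y ∈ g, B x y = 0 := by
    intro x hx y hy
    have hy' : y ∈ B.orthogonal g := hlag ▸ hy
    exact (LinearMap.BilinForm.mem_orthogonal_iff.mp hy') x hx
  -- the projection q
  set Q : V →ₗ[ℝ] Module.Dual ℝ g := B.compl₂ g.subtype with hQdef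
  have hQapp : ∀ (v : V) (x : g), Q v x = B v x := fun v x => rfl
  have hQj : ∀ ξ : Module.Dual ℝ g, Q (j ξ) = ξ := by
    intro ξ; ext x; simpa [hQapp] using hj ξ x
  have hQg : ∀ x ∈ g, Q x = 0 := by
    intro x hx; ext y; simpa [hQapp] using hgg x hx y y.2
  have hkerQ : ∀ v : V, Q v = 0 ↔ v ∈ g := by
    intro v
    constructor
    · intro h
      rw [hlag]
      rw [LinearMap.BilinForm.mem_orthogonal_iff]
      intro n hn
      have := congrArg (fun f : Module.Dual ℝ g => f ⟨n, hn⟩) h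
      simpa [hQapp, hsym v n] using this
    · intro h; exact hQg v h
  have hfr : Module.finrank ℝ (Module.Dual ℝ g) = Module.finrank ℝ g :=
    Subspace.dual_finrank_eq
  -- key computations for graphs
  have hQψ : ∀ (E0 : Module.Dual ℝ g →ₗ[ℝ] g) (ξ : Module.Dual ℝ g),
      Q ((g.subtype ∘ₗ E0 + j) ξ) = ξ := by
    intro E0 ξ
    have : (g.subtype ∘ₗ E0 + j) ξ = (↑(E0 ξ) : V) + j ξ := rfl
    rw [this, map_add, hQg _ (E0 ξ).2, hQj, zero_add]
  have hψinj : ∀ E0 : Module.Dual ℝ g →ₗ[ℝ] g,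
      Function.Injective (g.subtype ∘ₗ E0 + j) := by
    intro E0 ξ η h
    have := congrArg Q h
    rwa [hQψ, hQψ] at this
  have hBcalc : ∀ (E0 : Module.Dual ℝ g →ₗ[ℝ] g) (ξ : Module.Dual ℝ g),
      B ((g.subtype ∘ₗ E0 + j) ξ) ((g.subtype ∘ₗ E0 + j) ξ) = 2 * ξ (E0 ξ) := by
    intro E0 ξ
    have hv : (g.subtype ∘ₗ E0 + j) ξ = (↑(E0 ξ) : V) + j ξ := rfl
    have h1 : B ↑(E0 ξ) ↑(E0 ξ) = 0 := hgg _ (E0 ξ).2 _ (E0 ξ).2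
    have h2 : B (j ξ) ↑(E0 ξ) = ξ (E0 ξ) := hj ξ (E0 ξ)
    have h3 : B (↑(E0 ξ) : V) (j ξ) = ξ (E0 ξ) := by rw [hsym]; exact h2
    have h4 := hjiso ξ ξ
    rw [hv]
    simp only [map_add, LinearMap.add_apply, h1, h2, h3, h4]
    ring
  refine ⟨?_, ?_, ?_⟩
  · constructor
    · rintro ⟨hdim, hpos⟩
      -- build E0 from Eplus
      set φ : Eplus →ₗ[ℝ] Module.Dual ℝ g := Q ∘ₗ Eplus.subtype with hφdef
      have hφinj : Function.Injective φ := by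
        rw [← LinearMap.ker_eq_bot]
        rw [Submodule.eq_bot_iff]
        intro v hv
        have hQv : Q (↑v : V) = 0 := hv
        have hvg : (↑v : V) ∈ g := (hkerQ _).mp hQv
        have hB0 : B ↑v ↑v = 0 := hgg _ hvg _ hvg
        by_contra hv0
        have : (↑v : V) ≠ 0 := fun h => hv0 (Subtype.ext h)
        have := hpos ↑v v.2 this
        rw [hB0] at this; exact lt_irrefl 0 this
      have hφsurj : Function.Surjective φ :=
        (LinearMap.injective_iff_surjective_of_finrank_eq_finrank
          (hdim.trans hfr.symm)).mp hφinj
      set e := LinearEquiv.ofBijective φ ⟨hφinj, hφsurj⟩ with hedef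
      have heapp : ∀ v : Eplus, e v = φ v := fun v => rfl
      set F : Module.Dual ℝ g →ₗ[ℝ] V :=
        Eplus.subtype ∘ₗ (e.symm : Module.Dual ℝ g →ₗ[ℝ] Eplus) - j with hFdef
      have hFapp : ∀ ξ, F ξ = (↑(e.symm ξ) : V) - j ξ := fun ξ => rfl
      have hFg : ∀ ξ, F ξ ∈ g := by
        intro ξ
        rw [← hkerQ, hFapp, map_sub, hQj]
        have : Q ↑(e.symm ξ) = φ (e.symm ξ) := rfl
        rw [this]
        have : φ (e.symm ξ) = e (e.symm ξ) := rfl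
        rw [this, e.apply_symm_apply, sub_self]
      set E0 : Module.Dual ℝ g →ₗ[ℝ] g := F.codRestrict g hFg with hE0def
      have hkey : ∀ ξ, (g.subtype ∘ₗ E0 + j) ξ = (↑(e.symm ξ) : V) := by
        intro ξ
        show (↑(E0 ξ) : V) + j ξ = _
        have : (↑(E0 ξ) : V) = F ξ := rfl
        rw [this, hFapp, sub_add_cancel]
      have hrange : Eplus = LinearMap.range (g.subtype ∘ₗ E0 + j) := by
        ext v
        constructor
        · intro hv
          refine ⟨e ⟨v, hv⟩, ?_⟩
          rw [hkey, e.symm_apply_apply]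
        · rintro ⟨ξ, rfl⟩
          rw [hkey]
          exact (e.symm ξ).2
      refine ⟨E0, ?_, hrange⟩
      intro ξ hξ
      have hvne : ((g.subtype ∘ₗ E0 + j) ξ : V) ≠ 0 := by
        rw [hkey]
        simp only [ne_eq, Submodule.coe_eq_zero]
        intro h
        exact hξ (by simpa [h] using (e.apply_symm_apply ξ).symm)
      have hvmem : ((g.subtype ∘ₗ E0 + j) ξ : V) ∈ Eplus := by
        rw [hkey]; exact (e.symm ξ).2
      have := hpos _ hvmem hvne
      rw [hBcalc] at this
      linarith
    · rintro ⟨E0, hpos, rfl⟩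
      constructor
      · rw [LinearMap.finrank_range_of_inj (hψinj E0), hfr]
      · rintro v ⟨ξ, rfl⟩ hv0
        have hξ : ξ ≠ 0 := by
          rintro rfl
          exact hv0 (by simp)
        have := hpos ξ hξ
        rw [hBcalc]
        linarith
  · rintro E0 E0' ⟨-, h1⟩ ⟨-, h2⟩
    ext ξ
    have hmem : (g.subtype ∘ₗ E0 + j) ξ ∈ LinearMap.range (g.subtype ∘ₗ E0' + j) := by
      rw [← h2, h1]
      exact LinearMap.mem_range_self _ ξ
    obtain ⟨η, hη⟩ := hmem
    have hηξ : η = ξ := by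
      have := congrArg Q hη
      rwa [hQψ, hQψ] at this
    rw [hηξ] at hη
    have : (↑(E0' ξ) : V) + j ξ = (↑(E0 ξ) : V) + j ξ := hη
    have hcoe : (↑(E0' ξ) : V) = ↑(E0 ξ) := by
      have := add_right_cancel this
      exact this
    exact hcoe.symm
  · rintro E0 ⟨hpos, -⟩
    have hinj : Function.Injective E0 := by
      rw [← LinearMap.ker_eq_bot, Submodule.eq_bot_iff]
      intro ξ hξ
      by_contra hξ0
      have := hpos ξ hξ0
      rw [(LinearMap.mem_ker.mp hξ : E0 ξ = 0)] at this
      simp at this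
    exact ⟨hinj,
      (LinearMap.injective_iff_surjective_of_finrank_eq_finrank hfr).mp hinj⟩
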